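/- Every complete simple game on N={1,…,n} with exactly two desirability classes {1} and {2,…,n} (type composition (1,n−1)) is weighted. More precisely, such a game has either a unique shift-minimal winning vector (1,m_1) with 0≤m_1≤n−2, realized by the weighted representation [n; n−m_1, 1,…,1], or two shift-minimal winning vectors (1,m_1),(0,m_0) with 0≤m_1, m_1+2≤m_0≤n−1, realized by [m_0; m_0−m_1, 1,…,1]. -/
import Mathlib


def SimpleGame (n : ℕ) (W : Finset (Fin n) → Prop) : Prop :=
  ¬ W ∅ ∧ W Finset.univ ∧ ∀ ⦃S T : Finset (Fin n)⦄, S ⊆ T → W S → W T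

def Desir {n : ℕ} (W : Finset (Fin n) → Prop) (i j : Fin n) : Prop :=
  ∀ S : Finset (Fin n), j ∈ S → i ∉ S → W S → W (insert i (S.erase j))

def DesirTotalPreorder {n : ℕ} (W : Finset (Fin n) → Prop) : Prop :=
  (∀ i, Desir W i i) ∧ (∀ i j, Desir W i j ∨ Desir W j i) ∧
    (∀ i j k, Desir W i j → Desir W j k → Desir W i k)

def IsWeighted {n : ℕ} (W : Finset (Fin n) → Prop) : Prop :=
  ∃ q : ℝ, 0 < q ∧ ∃ w : Fin n → ℝ, (∀ i, 0 ≤ w i) ∧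
    ∀ S : Finset (Fin n), W S ↔ q ≤ ∑ i ∈ S, w i

/-- Every complete simple game with type composition `(1, n-1)` (agent `0` forming
the more desirable singleton class, agents `1,…,n-1` the other class) is weighted:
either it has a unique shift-minimal winning vector `(1,m₁)` with `0 ≤ m₁ ≤ n-2`,
realized by `[n; n-m₁, 1,…,1]`, or two shift-minimal winning vectors
`(1,m₁),(0,m₀)` with `m₁+2 ≤ m₀ ≤ n-1`, realized by `[m₀; m₀-m₁, 1,…,1]`. -/
-- exchange lemma
lemma exchange_aux {n : ℕ} [NeZero n] {W : Finset (Fin n) → Prop}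
    (hswap : ∀ i j : Fin n, i ≠ 0 → j ≠ 0 → Desir W i j) :
    ∀ (k : ℕ) (S T : Finset (Fin n)), (S \ T).card ≤ k →
      ((0 : Fin n) ∈ S ↔ (0 : Fin n) ∈ T) → S.card = T.card → W S → W T := by
  intro k
  induction k with
  | zero =>
    intro S T hcard h0 hc hW
    have hsub : S ⊆ T := by
      rw [← Finset.sdiff_eq_empty_iff_subset]
      exact Finset.card_eq_zero.mp (Nat.le_zero.mp hcard)
    have : S = T := Finset.eq_of_subset_of_card_le hsub (le_of_eq hc.symm)
    rwa [← this]
  | succ k ih =>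
    intro S T hcard h0 hc hW
    by_cases hempty : S \ T = ∅
    · have hsub : S ⊆ T := Finset.sdiff_eq_empty_iff_subset.mp hempty
      have : S = T := Finset.eq_of_subset_of_card_le hsub (le_of_eq hc.symm)
      rwa [← this]
    · obtain ⟨j, hj⟩ := Finset.nonempty_iff_ne_empty.mpr hempty
      have hjS : j ∈ S := (Finset.mem_sdiff.mp hj).1
      have hjT : j ∉ T := (Finset.mem_sdiff.mp hj).2
      have hTS : (T \ S).Nonempty := by
        rw [← Finset.card_pos]
        have e : (S \ T).card = (T \ S).card := by
          have h1 := Finset.card_sdiff_add_card_inter S T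
          have h2 := Finset.card_sdiff_add_card_inter T S
          rw [Finset.inter_comm] at h2
          omega
        have : 0 < (S \ T).card := Finset.card_pos.mpr ⟨j, hj⟩
        omega
      obtain ⟨i, hi⟩ := hTS
      have hiT : i ∈ T := (Finset.mem_sdiff.mp hi).1
      have hiS : i ∉ S := (Finset.mem_sdiff.mp hi).2
      have hi0 : i ≠ 0 := by rintro rfl; exact hiS (h0.mpr hiT)
      have hj0 : j ≠ 0 := by rintro rfl; exact hjT (h0.mp hjS)
      have hW' : W (insert i (S.erase j)) := hswap i j hi0 hj0 S hjS hiS hW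
      apply ih (insert i (S.erase j)) T _ _ _ hW'
      · have hsub : insert i (S.erase j) \ T ⊆ (S \ T).erase j := by
          intro x hx
          rw [Finset.mem_sdiff, Finset.mem_insert] at hx
          rcases hx.1 with rfl | hxS
          · exact absurd hiT hx.2
          · rw [Finset.mem_erase] at hxS ⊢
            exact ⟨hxS.1, Finset.mem_sdiff.mpr ⟨hxS.2, hx.2⟩⟩
        have := Finset.card_le_card hsub
        have := Finset.card_erase_of_mem hj
        omega
      · constructor
        · intro h
          rcases Finset.mem_insert.mp h with h | h
          · exact absurd h.symm hi0
          · exact h0.mp (Finset.mem_of_mem_erase h)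
        · intro h
          exact Finset.mem_insert.mpr (Or.inr (Finset.mem_erase.mpr ⟨Ne.symm hj0, h0.mpr h⟩))
      · rw [Finset.card_insert_of_notMem (fun h => hiS (Finset.mem_of_mem_erase h)),
          Finset.card_erase_of_mem hjS]
        have : 1 ≤ S.card := Finset.card_pos.mpr ⟨j, hjS⟩
        omega

lemma sum_w {n : ℕ} [NeZero n] (c : ℝ) (S : Finset (Fin n)) :
    ∑ i ∈ S, (if (i : ℕ) = 0 then c else 1) =
      (if (0 : Fin n) ∈ S then c - 1 else 0) + S.card := by
  have : ∀ i : Fin n, (if (i : ℕ) = 0 then c else (1:ℝ)) =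
      (if i = 0 then c - 1 else 0) + 1 := by
    intro i
    by_cases h : i = 0
    · simp [h]
    · rw [if_neg h, if_neg (fun hh => h (by ext; simpa using hh))]; ring
  simp_rw [this, Finset.sum_add_distrib, Finset.sum_ite_eq' S (0 : Fin n) (fun _ => c - 1)]
  simp

theorem one_star_family_weighted (n : ℕ) (hn : 2 ≤ n)
    (W : Finset (Fin n) → Prop) (hsg : SimpleGame n W)
    (hc : DesirTotalPreorder W)
    (hclass : ∀ i j : Fin n, (Desir W i j ∧ Desir W j i) ↔ ((i : ℕ) = 0 ↔ (j : ℕ) = 0))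
    (hstrong : ∀ j : Fin n, Desir W ⟨0, by omega⟩ j) :
    IsWeighted W ∧
      ((∃ m₁ : ℕ, m₁ ≤ n - 2 ∧
          ∀ S : Finset (Fin n), W S ↔
            (n : ℝ) ≤ ∑ i ∈ S, (if (i : ℕ) = 0 then (n : ℝ) - m₁ else 1)) ∨
        (∃ m₀ m₁ : ℕ, m₁ + 2 ≤ m₀ ∧ m₀ ≤ n - 1 ∧
          ∀ S : Finset (Fin n), W S ↔
            (m₀ : ℝ) ≤ ∑ i ∈ S, (if (i : ℕ) = 0 then (m₀ : ℝ) - m₁ else 1))) := by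
  classical
  haveI : NeZero n := ⟨by omega⟩
  obtain ⟨hempty, huniv, hmono⟩ := hsg
  have hz : (⟨0, by omega⟩ : Fin n) = (0 : Fin n) := by ext; simp
  have hswap : ∀ i j : Fin n, i ≠ 0 → j ≠ 0 → Desir W i j := by
    intro i j hi hj
    refine ((hclass i j).mpr ?_).1
    have hv : ∀ x : Fin n, x ≠ 0 → (x : ℕ) ≠ 0 := fun x hx h => hx (by ext; simp [h])
    simp [hv i hi, hv j hj]
  have exch : ∀ S T : Finset (Fin n), ((0 : Fin n) ∈ S ↔ (0 : Fin n) ∈ T) →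
      S.card = T.card → W S → W T :=
    fun S T => exchange_aux hswap (S \ T).card S T le_rfl
  set o1 : Fin n := ⟨1, by omega⟩ with ho1
  have ho1ne : o1 ≠ 0 := by simp [ho1, Fin.ext_iff]
  -- witness from ¬ Desir o1 0
  have hnd : ¬ Desir W o1 (0 : Fin n) := by
    intro h
    have h2 := hstrong o1
    rw [hz] at h2
    have := (hclass o1 (0 : Fin n)).mp ⟨h, h2⟩
    simp [ho1] at this
  simp only [Desir] at hnd
  push_neg at hnd
  obtain ⟨S₀, h0S₀, h1S₀, hWS₀, hWS₀'⟩ := hnd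
  have hS₀card : S₀.card ≤ n - 1 := by
    have : S₀ ⊆ Finset.univ.erase o1 := fun x hx =>
      Finset.mem_erase.mpr ⟨fun h => h1S₀ (h ▸ hx), Finset.mem_univ x⟩
    have := Finset.card_le_card this
    rw [Finset.card_erase_of_mem (Finset.mem_univ o1), Finset.card_univ] at this
    simpa using this
  -- threshold m₁
  have hP1 : ∃ s : ℕ, ∃ S : Finset (Fin n), (0 : Fin n) ∈ S ∧ S.card ≤ s + 1 ∧ W S :=
    ⟨n - 1, Finset.univ, Finset.mem_univ _, by rw [Finset.card_univ, Fintype.card_fin]; omega, huniv⟩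
  set m₁ := Nat.find hP1 with hm₁def
  have hm₁le : m₁ ≤ n - 2 := Nat.find_le ⟨S₀, h0S₀, by omega, hWS₀⟩
  have h1 : ∀ S : Finset (Fin n), (0 : Fin n) ∈ S → (W S ↔ m₁ + 1 ≤ S.card) := by
    intro S h0S
    constructor
    · intro hW
      have h1c : 1 ≤ S.card := Finset.card_pos.mpr ⟨0, h0S⟩
      have : m₁ ≤ S.card - 1 := Nat.find_le ⟨S, h0S, by omega, hW⟩
      omega
    · intro hcard
      obtain ⟨T, h0T, hTc, hWT⟩ := Nat.find_spec hP1
      have hTc' : T.card ≤ S.card := le_trans hTc hcard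
      obtain ⟨U, hTU, hU, hUc⟩ := Finset.exists_subsuperset_card_eq (Finset.subset_univ T)
        hTc' (by rw [Finset.card_univ]; exact Finset.card_le_univ S)
      exact exch U S (by simp [hTU h0T, h0S]) hUc (hmono hTU hWT)
  by_cases hex0 : ∃ S : Finset (Fin n), (0 : Fin n) ∉ S ∧ W S
  · -- two shift-minimal vectors
    obtain ⟨S₁, h0S₁, hWS₁⟩ := hex0
    have hQ : ∃ s : ℕ, ∃ S : Finset (Fin n), (0 : Fin n) ∉ S ∧ S.card ≤ s ∧ W S :=
      ⟨S₁.card, S₁, h0S₁, le_rfl, hWS₁⟩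
    set m₀ := Nat.find hQ with hm₀def
    have hS₁card : S₁.card ≤ n - 1 := by
      have : S₁ ⊆ Finset.univ.erase 0 := fun x hx =>
        Finset.mem_erase.mpr ⟨fun h => h0S₁ (h ▸ hx), Finset.mem_univ x⟩
      have := Finset.card_le_card this
      rw [Finset.card_erase_of_mem (Finset.mem_univ _), Finset.card_univ] at this
      simpa using this
    have hm₀n : m₀ ≤ n - 1 := Nat.find_le ⟨S₁, h0S₁, hS₁card, hWS₁⟩
    have h0 : ∀ S : Finset (Fin n), (0 : Fin n) ∉ S → (W S ↔ m₀ ≤ S.card) := by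
      intro S h0S
      have hSsub : S ⊆ Finset.univ.erase 0 := fun x hx =>
        Finset.mem_erase.mpr ⟨fun h => h0S (h ▸ hx), Finset.mem_univ x⟩
      constructor
      · intro hW
        exact Nat.find_le ⟨S, h0S, le_rfl, hW⟩
      · intro hcard
        obtain ⟨T, h0T, hTc, hWT⟩ := Nat.find_spec hQ
        have hTsub : T ⊆ Finset.univ.erase 0 := fun x hx =>
          Finset.mem_erase.mpr ⟨fun h => h0T (h ▸ hx), Finset.mem_univ x⟩
        obtain ⟨U, hTU, hU, hUc⟩ := Finset.exists_subsuperset_card_eq hTsub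
          (le_trans hTc hcard) (Finset.card_le_card hSsub)
        have h0U : (0 : Fin n) ∉ U := fun h => by simpa using (hU h)
        exact exch U S (by simp [h0U, h0S]) hUc (hmono hTU hWT)
    -- m₁ + 2 ≤ m₀ via witness S₀
    have hm₁m₀ : m₁ + 2 ≤ m₀ := by
      set S₀' := insert o1 (S₀.erase 0) with hS₀'
      have h0S₀' : (0 : Fin n) ∉ S₀' := by
        simp [hS₀', Ne.symm ho1ne]
      have hcS₀' : S₀'.card = S₀.card := by
        rw [hS₀', Finset.card_insert_of_notMem
          (fun h => h1S₀ (Finset.mem_of_mem_erase h)),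
          Finset.card_erase_of_mem h0S₀]
        have : 1 ≤ S₀.card := Finset.card_pos.mpr ⟨0, h0S₀⟩
        omega
      have hlt : ¬ (m₀ ≤ S₀'.card) := fun h => hWS₀' ((h0 S₀' h0S₀').mpr h)
      have hge : m₁ + 1 ≤ S₀.card := (h1 S₀ h0S₀).mp hWS₀
      omega
    have key : ∀ S : Finset (Fin n), W S ↔
        (m₀ : ℝ) ≤ ∑ i ∈ S, (if (i : ℕ) = 0 then (m₀ : ℝ) - m₁ else 1) := by
      intro S
      rw [sum_w]
      by_cases h0S : (0 : Fin n) ∈ S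
      · rw [if_pos h0S, h1 S h0S]
        constructor
        · intro h
          have : (m₁ : ℝ) + 1 ≤ S.card := by exact_mod_cast h
          linarith
        · intro h
          have : (m₁ : ℝ) + 1 ≤ S.card := by linarith
          exact_mod_cast this
      · rw [if_neg h0S, h0 S h0S]
        constructor
        · intro h
          have : (m₀ : ℝ) ≤ S.card := by exact_mod_cast h
          linarith
        · intro h
          have : (m₀ : ℝ) ≤ S.card := by linarith
          exact_mod_cast this
    refine ⟨⟨m₀, ?_, fun i => if (i : ℕ) = 0 then (m₀ : ℝ) - m₁ else 1, ?_, key⟩,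
      Or.inr ⟨m₀, m₁, hm₁m₀, hm₀n, key⟩⟩
    · have : (0 : ℝ) < (m₁ : ℝ) + 2 := by positivity
      have h2 : ((m₁ : ℝ) + 2) ≤ m₀ := by exact_mod_cast hm₁m₀
      linarith
    · intro i
      dsimp only
      by_cases h : (i : ℕ) = 0
      · rw [if_pos h]
        have : (m₁ : ℝ) + 2 ≤ m₀ := by exact_mod_cast hm₁m₀
        linarith
      · rw [if_neg h]; norm_num
  · -- unique shift-minimal vector
    push_neg at hex0
    have key : ∀ S : Finset (Fin n), W S ↔
        (n : ℝ) ≤ ∑ i ∈ S, (if (i : ℕ) = 0 then (n : ℝ) - m₁ else 1) := by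
      intro S
      rw [sum_w]
      by_cases h0S : (0 : Fin n) ∈ S
      · rw [if_pos h0S, h1 S h0S]
        have hcn : S.card ≤ n := by simpa using Finset.card_le_univ S
        constructor
        · intro h
          have : (m₁ : ℝ) + 1 ≤ S.card := by exact_mod_cast h
          linarith
        · intro h
          have : (m₁ : ℝ) + 1 ≤ S.card := by linarith
          exact_mod_cast this
      · rw [if_neg h0S]
        have hW : ¬ W S := fun h => (hex0 S h0S) h
        have hScard : S.card ≤ n - 1 := by
          have : S ⊆ Finset.univ.erase 0 := fun x hx =>
            Finset.mem_erase.mpr ⟨fun h => h0S (h ▸ hx), Finset.mem_univ x⟩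
          have := Finset.card_le_card this
          rw [Finset.card_erase_of_mem (Finset.mem_univ _), Finset.card_univ] at this
          simpa using this
        constructor
        · intro h; exact absurd h hW
        · intro h
          exfalso
          have : (S.card : ℝ) < n := by
            exact_mod_cast (show S.card < n by omega)
          linarith
    refine ⟨⟨n, by exact_mod_cast (show 0 < n by omega),
      fun i => if (i : ℕ) = 0 then (n : ℝ) - m₁ else 1, ?_, key⟩,
      Or.inl ⟨m₁, hm₁le, key⟩⟩
    intro i
    dsimp only
    by_cases h : (i : ℕ) = 0
    · rw [if_pos h]
      have : (m₁ : ℝ) ≤ n := by exact_mod_cast (show m₁ ≤ n by omega)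
      linarith
    · rw [if_neg h]; norm_num
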